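/- Let g be strictly increasing and concave with g(0)=0, g(1)=1, and suppose g(r) ≥ r for r ∈ [0,1]. Let V : [0,T] → ℝ be continuous and positive, A > 0, 1 < q < 2, and suppose n, s : [0,T] → ℝ satisfy s' (t) = (g(A n(t) s(t)^(q/2))/n(t))·V(t), n(t) ≥ n̲ > 0, s(0) > 0, and A n(t) s(t)^(q/2) ≤ 1 for all t. Then s(T)^(1-q/2) ≥ s(0)^(1-q/2) + A(1-q/2)·∫₀^T V(u) du, and s(T) ≤ (A n̲)^(-2/q). Consequently, if ∫₀^T V(u) du > ((A n̲)^(-(2/q))(1-q/2) - s(0)^(1-q/2))/(A(1-q/2)), the constraints cannot be satisfied on all of [0,T]. -/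
import Mathlib


/-- Lower bound on the growth of the basal area and the upper bound
`s T ≤ (A n̲)^(-2/q)` forced by the constraints of the forest growth model. -/
theorem stmt3 (g : ℝ → ℝ) (V n s : ℝ → ℝ) (A q T nlow : ℝ)
    (hA : 0 < A) (hq1 : 1 < q) (hq2 : q < 2) (hT : 0 < T) (hnlow : 0 < nlow)
    (hgmono : StrictMonoOn g (Set.Ici 0))
    (hgconc : ConcaveOn ℝ (Set.Ici 0) g)
    (hg0 : g 0 = 0) (hg1 : g 1 = 1)
    (hgr : ∀ r ∈ Set.Icc (0:ℝ) 1, r ≤ g r)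
    (hV : ContinuousOn V (Set.Icc 0 T))
    (hVpos : ∀ t ∈ Set.Icc (0:ℝ) T, 0 < V t)
    (hspos : ∀ t ∈ Set.Icc (0:ℝ) T, 0 < s t)
    (hs0 : 0 < s 0)
    (hode : ∀ t ∈ Set.Icc (0:ℝ) T,
      HasDerivAt s (g (A * n t * s t ^ (q / 2)) / n t * V t) t)
    (hnge : ∀ t ∈ Set.Icc (0:ℝ) T, nlow ≤ n t)
    (hrdi : ∀ t ∈ Set.Icc (0:ℝ) T, A * n t * s t ^ (q / 2) ≤ 1) :
    s 0 ^ (1 - q / 2) + A * (1 - q / 2) * ∫ u in (0:ℝ)..T, V u ≤ s T ^ (1 - q / 2)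
    ∧ s T ≤ (A * nlow) ^ (-(2 / q)) := by
  have hq0 : (0:ℝ) < q := lt_trans one_pos hq1
  have he : (0:ℝ) < 1 - q / 2 := by linarith
  set e : ℝ := 1 - q / 2 with hedef
  have hTmem : T ∈ Set.Icc (0:ℝ) T := ⟨le_of_lt hT, le_refl T⟩
  -- Part 2
  have hsT : 0 < s T := hspos T hTmem
  have hsTq : 0 < s T ^ (q / 2) := Real.rpow_pos_of_pos hsT _
  have h2 : s T ≤ (A * nlow) ^ (-(2 / q)) := by
    have hAn : 0 < A * nlow := mul_pos hA hnlow
    have h1 : A * nlow * s T ^ (q / 2) ≤ 1 := by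
      calc A * nlow * s T ^ (q / 2) ≤ A * n T * s T ^ (q / 2) :=
            mul_le_mul_of_nonneg_right
              (mul_le_mul_of_nonneg_left (hnge T hTmem) hA.le) hsTq.le
        _ ≤ 1 := hrdi T hTmem
    have h1' : s T ^ (q / 2) ≤ (A * nlow)⁻¹ := by
      calc s T ^ (q / 2) = (A * nlow)⁻¹ * (A * nlow * s T ^ (q / 2)) := by
            field_simp
        _ ≤ (A * nlow)⁻¹ * 1 := mul_le_mul_of_nonneg_left h1 (by positivity)
        _ = (A * nlow)⁻¹ := mul_one _
    have key : (s T ^ (q / 2)) ^ (2 / q) ≤ ((A * nlow)⁻¹) ^ (2 / q) :=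
      Real.rpow_le_rpow hsTq.le h1' (by positivity)
    have heq1 : (s T ^ (q / 2)) ^ (2 / q) = s T := by
      rw [← Real.rpow_mul hsT.le]
      have : q / 2 * (2 / q) = 1 := by field_simp
      rw [this, Real.rpow_one]
    have heq2 : ((A * nlow)⁻¹) ^ (2 / q) = (A * nlow) ^ (-(2 / q)) := by
      rw [Real.inv_rpow hAn.le, ← Real.rpow_neg hAn.le]
    rwa [heq1, heq2] at key
  refine ⟨?_, h2⟩
  -- Part 1
  have hVint : MeasureTheory.IntegrableOn V (Set.Icc 0 T) :=
    hV.integrableOn_compact isCompact_Icc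
  set G : ℝ → ℝ := fun x => ∫ u in (0:ℝ)..x, V u with hGdef
  have hGcont : ContinuousOn G (Set.Icc 0 T) := by
    have := intervalIntegral.continuousOn_primitive_interval
      (μ := MeasureTheory.volume) (f := V) (a := 0) (b := T)
      (by rwa [Set.uIcc_of_le (le_of_lt hT)])
    rwa [Set.uIcc_of_le (le_of_lt hT)] at this
  set h : ℝ → ℝ := fun t => s t ^ e - A * e * G t with hhdef
  have hscont : ContinuousOn s (Set.Icc 0 T) := fun t ht =>
    (hode t ht).continuousAt.continuousWithinAt
  have hhcont : ContinuousOn h (Set.Icc 0 T) := by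
    apply ContinuousOn.sub
    · exact hscont.rpow_const (fun t ht => Or.inl (ne_of_gt (hspos t ht)))
    · exact continuousOn_const.mul hGcont
  have hint : interior (Set.Icc (0:ℝ) T) = Set.Ioo 0 T := interior_Icc
  have hmono : MonotoneOn h (Set.Icc 0 T) := by
    apply monotoneOn_of_hasDerivWithinAt_nonneg (convex_Icc 0 T) hhcont
      (f' := fun t => g (A * n t * s t ^ (q / 2)) / n t * V t * e * s t ^ (e - 1)
        - A * e * V t)
    · intro t ht
      rw [hint] at ht
      have ht' : t ∈ Set.Icc (0:ℝ) T := Set.mem_Icc_of_Ioo ht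
      have hst : 0 < s t := hspos t ht'
      have hF : HasDerivAt (fun x => s x ^ e)
          (g (A * n t * s t ^ (q / 2)) / n t * V t * e * s t ^ (e - 1)) t :=
        (hode t ht').rpow_const (Or.inl (ne_of_gt hst))
      have hVt : ContinuousAt V t :=
        (hV t ht').continuousAt (Icc_mem_nhds ht.1 ht.2)
      have hVI : IntervalIntegrable V MeasureTheory.volume 0 t := by
        apply ContinuousOn.intervalIntegrable
        apply hV.mono
        rw [Set.uIcc_of_le ht.1.le]
        exact Set.Icc_subset_Icc le_rfl ht.2.le
      have hmeas : StronglyMeasurableAtFilter V (nhds t) MeasureTheory.volume :=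
        ⟨Set.Icc 0 T, Icc_mem_nhds ht.1 ht.2,
          hV.aestronglyMeasurable measurableSet_Icc⟩
      have hG : HasDerivAt G (V t) t :=
        intervalIntegral.integral_hasDerivAt_right hVI hmeas hVt
      exact ((hF.sub ((hG.const_mul (A * e)))).hasDerivWithinAt)
    · intro t ht
      rw [hint] at ht
      have ht' : t ∈ Set.Icc (0:ℝ) T := Set.mem_Icc_of_Ioo ht
      have hst : 0 < s t := hspos t ht'
      have hnt : 0 < n t := lt_of_lt_of_le hnlow (hnge t ht')
      have hVt : 0 < V t := hVpos t ht'
      have hr0 : 0 ≤ A * n t * s t ^ (q / 2) := by positivity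
      have hkey : A * n t * s t ^ (q / 2) ≤ g (A * n t * s t ^ (q / 2)) :=
        hgr _ ⟨hr0, hrdi t ht'⟩
      have hge : A * s t ^ (q / 2) ≤ g (A * n t * s t ^ (q / 2)) / n t := by
        rw [le_div_iff₀ hnt]
        calc A * s t ^ (q / 2) * n t = A * n t * s t ^ (q / 2) := by ring
          _ ≤ _ := hkey
      have hpow : s t ^ (q / 2) * s t ^ (e - 1) = 1 := by
        rw [← Real.rpow_add hst]
        norm_num [hedef]
      have hsp : 0 < s t ^ (e - 1) := Real.rpow_pos_of_pos hst _
      have : A ≤ g (A * n t * s t ^ (q / 2)) / n t * s t ^ (e - 1) := by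
        calc A = A * (s t ^ (q / 2) * s t ^ (e - 1)) := by rw [hpow]; ring
          _ = A * s t ^ (q / 2) * s t ^ (e - 1) := by ring
          _ ≤ _ := mul_le_mul_of_nonneg_right hge (le_of_lt hsp)
      nlinarith [mul_le_mul_of_nonneg_right this (le_of_lt hVt)]
  have h0T := hmono (Set.left_mem_Icc.2 (le_of_lt hT)) hTmem (le_of_lt hT)
  simp only [hhdef, hGdef, intervalIntegral.integral_same, mul_zero, sub_zero] at h0T
  linarith
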